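/- Let C ⊆ D be open and bounded with compact closure contained in D. Then there exists ε₀ ∈ (0,1] such that for every ε with |ε| ≤ ε₀ and every z ∈ C there exists exactly one differentiable function x : [0,T] → D with x(0) = z satisfying x'(t) = ε·G(t, x(t)) + ε²·R(t, x(t), ε) for all t ∈ [0,T]; in particular, solutions starting in C are defined on the whole interval [0,T]. -/

import Mathlib

open Set Metric NNReal Topology

/-- A `T`-periodic bound on `[0,T]` extends to all of `ℝ`. -/
lemma periodic_bound_aux {f : ℝ → ℝ} {T M : ℝ} (hT : 0 < T)
    (hper : Function.Periodic f T) (hb : ∀ s ∈ Icc (0 : ℝ) T, f s ≤ M) :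
    ∀ s : ℝ, f s ≤ M := by
  intro s
  obtain ⟨y, hy, hfy⟩ := hper.exists_mem_Ico₀ hT s
  rw [hfy]
  exact hb y ⟨hy.1, hy.2.le⟩

/-- A continuous `T`-periodic (in time) vector field is bounded on `ℝ × K` for `K` a compact
subset of `D`. -/
lemma bound_all_aux {E : Type*} [NormedAddCommGroup E] {T : ℝ} (hT : 0 < T)
    {D K : Set E} (hKD : K ⊆ D) (hKc : IsCompact K) {g : ℝ → E → E}
    (hgc : ContinuousOn (fun p : ℝ × E => g p.1 p.2) (univ ×ˢ D))
    (hgper : ∀ t x, g (t + T) x = g t x) :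
    ∃ M : ℝ, 0 ≤ M ∧ ∀ t : ℝ, ∀ x ∈ K, ‖g t x‖ ≤ M := by
  obtain ⟨M, hM⟩ := (isCompact_Icc.prod hKc).exists_bound_of_continuousOn
    (hgc.mono (prod_mono (subset_univ _) hKD))
  refine ⟨max M 0, le_max_right _ _, fun t x hx => ?_⟩
  refine periodic_bound_aux (f := fun s => ‖g s x‖) hT (fun s => by simp only [hgper]) (fun s hs => ?_) t
  exact le_trans (hM (s, x) ⟨hs, hx⟩) (le_max_left _ _)

/-- A locally Lipschitz (uniformly in `t`) bounded vector field is Lipschitz on any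
compact subset of `D`, with a constant uniform in `t`. -/
lemma lipschitzOnWith_of_compact {E : Type*} [NormedAddCommGroup E] [NormedSpace ℝ E]
    {D : Set E} (hD : IsOpen D) {K : Set E} (hK : IsCompact K) (hKD : K ⊆ D)
    {F : ℝ → E → E} {M : ℝ} (hM : ∀ t : ℝ, ∀ x ∈ K, ‖F t x‖ ≤ M)
    (hlip : ∀ x₀ ∈ D, ∃ U ∈ nhds x₀, ∃ L : ℝ, ∀ t : ℝ, ∀ x₁ ∈ U ∩ D, ∀ x₂ ∈ U ∩ D,
      ‖F t x₁ - F t x₂‖ ≤ L * ‖x₁ - x₂‖) :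
    ∃ L : ℝ≥0, ∀ t : ℝ, LipschitzOnWith L (F t) K := by
  rcases K.eq_empty_or_nonempty with rfl | ⟨w, hw⟩
  · exact ⟨0, fun t => by simp [lipschitzOnWith_empty]⟩
  have hM0 : 0 ≤ M := le_trans (norm_nonneg _) (hM 0 w hw)
  -- local data
  have key : ∀ x ∈ K, ∃ r : ℝ, 0 < r ∧ ∃ L : ℝ, 0 ≤ L ∧ ∀ t : ℝ, ∀ x₁ ∈ ball x (2 * r),
      ∀ x₂ ∈ ball x (2 * r), ‖F t x₁ - F t x₂‖ ≤ L * ‖x₁ - x₂‖ := by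
    intro x hx
    obtain ⟨U, hU, L, hL⟩ := hlip x (hKD hx)
    have hUD : U ∩ D ∈ 𝓝 x := Filter.inter_mem hU (hD.mem_nhds (hKD hx))
    obtain ⟨s, hs, hsub⟩ := Metric.mem_nhds_iff.1 hUD
    refine ⟨s / 2, by linarith, max L 0, le_max_right _ _, fun t x₁ h₁ x₂ h₂ => ?_⟩
    have h₁' : x₁ ∈ U ∩ D := hsub (by rw [mem_ball] at h₁ ⊢; linarith [h₁])
    have h₂' : x₂ ∈ U ∩ D := hsub (by rw [mem_ball] at h₂ ⊢; linarith [h₂])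
    calc ‖F t x₁ - F t x₂‖ ≤ L * ‖x₁ - x₂‖ := hL t x₁ h₁' x₂ h₂'
      _ ≤ max L 0 * ‖x₁ - x₂‖ :=
        mul_le_mul_of_nonneg_right (le_max_left _ _) (norm_nonneg _)
  choose! r hr L hL0 hLip using key
  obtain ⟨tf, htfK, htf⟩ := hK.elim_nhds_subcover (fun x => ball x (r x))
    (fun x hx => ball_mem_nhds x (hr x hx))
  have htfne : tf.Nonempty := by
    rcases Set.mem_iUnion₂.1 (htf hw) with ⟨i, hi, _⟩
    exact ⟨i, hi⟩
  set δ : ℝ := tf.inf' htfne r with hδdef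
  have hδpos : 0 < δ := by
    rw [hδdef, Finset.lt_inf'_iff]
    exact fun i hi => hr i (htfK i hi)
  set L₀ : ℝ := tf.sup' htfne L with hL₀def
  have hL₀i : ∀ i ∈ tf, L i ≤ L₀ := fun i hi => Finset.le_sup' L hi
  set Lb : ℝ := max L₀ (2 * M / δ) with hLbdef
  have hLb0 : 0 ≤ Lb := le_trans (div_nonneg (by linarith) hδpos.le) (le_max_right _ _)
  refine ⟨⟨Lb, hLb0⟩, fun t => LipschitzOnWith.of_dist_le_mul fun x₁ h₁ x₂ h₂ => ?_⟩
  change dist (F t x₁) (F t x₂) ≤ Lb * dist x₁ x₂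
  rw [dist_eq_norm, dist_eq_norm]
  rcases lt_or_ge ‖x₁ - x₂‖ δ with hlt | hge
  · rcases Set.mem_iUnion₂.1 (htf h₁) with ⟨i, hi, hx₁i⟩
    have hδri : δ ≤ r i := Finset.inf'_le r hi
    have hx₂i : x₂ ∈ ball i (2 * r i) := by
      rw [mem_ball] at hx₁i ⊢
      have : dist x₂ x₁ < δ := by rwa [dist_comm, dist_eq_norm]
      calc dist x₂ i ≤ dist x₂ x₁ + dist x₁ i := dist_triangle _ _ _
        _ < δ + r i := add_lt_add this hx₁i
        _ ≤ 2 * r i := by linarith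
    have hx₁i' : x₁ ∈ ball i (2 * r i) := by
      rw [mem_ball] at hx₁i ⊢
      have := hr i (htfK i hi)
      linarith
    calc ‖F t x₁ - F t x₂‖ ≤ L i * ‖x₁ - x₂‖ := hLip i (htfK i hi) t x₁ hx₁i' x₂ hx₂i
      _ ≤ Lb * ‖x₁ - x₂‖ := by
        apply mul_le_mul_of_nonneg_right _ (norm_nonneg _)
        exact le_trans (hL₀i i hi) (le_max_left _ _)
  · calc ‖F t x₁ - F t x₂‖ ≤ ‖F t x₁‖ + ‖F t x₂‖ := norm_sub_le _ _
      _ ≤ M + M := add_le_add (hM t x₁ h₁) (hM t x₂ h₂)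
      _ = (2 * M / δ) * δ := by field_simp; ring
      _ ≤ (2 * M / δ) * ‖x₁ - x₂‖ :=
        mul_le_mul_of_nonneg_left hge (div_nonneg (by linarith) hδpos.le)
      _ ≤ Lb * ‖x₁ - x₂‖ :=
        mul_le_mul_of_nonneg_right (le_max_right _ _) (norm_nonneg _)

/-- Picard–Lindelöf theorem, with the additional conclusion that the solution stays in the
closed ball of radius `R` around the initial value. -/
theorem isPicardLindelof_exists_mem_closedBall {E : Type*} [NormedAddCommGroup E]
    [NormedSpace ℝ E] [CompleteSpace E] {v : ℝ → E → E}
    {tMin tMax : ℝ} {t₀ : Icc tMin tMax} (x₀ : E) {a L K : ℝ≥0}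
    (hpl : IsPicardLindelof v t₀ x₀ a 0 L K) :
    ∃ f : ℝ → E, f t₀ = x₀ ∧ ∀ t ∈ Icc tMin tMax, f t ∈ closedBall x₀ a ∧
      HasDerivWithinAt f (v t (f t)) (Icc tMin tMax) t := by
  obtain ⟨α, hα⟩ := ODE.FunSpace.exists_isFixedPt_next hpl (mem_closedBall_self le_rfl)
  refine ⟨α.compProj, by rw [ODE.FunSpace.compProj_val, ← hα, ODE.FunSpace.next_apply₀],
    fun t ht => ⟨α.compProj_mem_closedBall hpl.mul_max_le, ?_⟩⟩
  apply ODE.hasDerivWithinAt_picard_Icc t₀.2 hpl.continuousOn_uncurry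
    α.continuous_compProj.continuousOn (fun _ _ => α.compProj_mem_closedBall hpl.mul_max_le)
    x₀ ht |>.congr_of_mem _ ht
  intro t' ht'
  nth_rw 1 [← hα]
  rw [ODE.FunSpace.compProj_of_mem ht', ODE.FunSpace.next_apply]

set_option maxHeartbeats 2000000 in
/-- For `|ε|` sufficiently small, every initial condition `z` in an open bounded set `C` with
compact closure contained in `D` gives rise to exactly one solution of
`x' = ε G(t,x) + ε² R(t,x,ε)` defined on the whole interval `[0,T]` with values in `D`. -/
theorem existence_uniqueness_on_interval {n : ℕ} (T : ℝ) (hT : 0 < T)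
    (D : Set (EuclideanSpace ℝ (Fin n))) (hD : IsOpen D)
    (G : ℝ → EuclideanSpace ℝ (Fin n) → EuclideanSpace ℝ (Fin n))
    (R : ℝ → EuclideanSpace ℝ (Fin n) → ℝ → EuclideanSpace ℝ (Fin n))
    (hGc : ContinuousOn (fun p : ℝ × EuclideanSpace ℝ (Fin n) => G p.1 p.2) (univ ×ˢ D))
    (hRc : ContinuousOn (fun p : ℝ × EuclideanSpace ℝ (Fin n) × ℝ => R p.1 p.2.1 p.2.2)
      (univ ×ˢ D ×ˢ Icc (-1 : ℝ) 1))
    (hGper : ∀ t x, G (t + T) x = G t x)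
    (hRper : ∀ t x ε, R (t + T) x ε = R t x ε)
    (hGlip : ∀ x₀ ∈ D, ∃ U ∈ nhds x₀, ∃ L : ℝ, ∀ t : ℝ, ∀ x₁ ∈ U ∩ D, ∀ x₂ ∈ U ∩ D,
      ‖G t x₁ - G t x₂‖ ≤ L * ‖x₁ - x₂‖)
    (hRlip : ∀ x₀ ∈ D, ∃ U ∈ nhds x₀, ∃ L : ℝ, ∀ t : ℝ, ∀ ε ∈ Icc (-1 : ℝ) 1,
      ∀ x₁ ∈ U ∩ D, ∀ x₂ ∈ U ∩ D, ‖R t x₁ ε - R t x₂ ε‖ ≤ L * ‖x₁ - x₂‖)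
    (C : Set (EuclideanSpace ℝ (Fin n))) (hCopen : IsOpen C)
    (hCbdd : Bornology.IsBounded C) (hCcl : closure C ⊆ D) :
    ∃ ε₀ ∈ Ioc (0 : ℝ) 1, ∀ ε : ℝ, |ε| ≤ ε₀ → ∀ z ∈ C,
      ∃ x : ℝ → EuclideanSpace ℝ (Fin n),
        ((∀ t ∈ Icc (0 : ℝ) T, x t ∈ D) ∧ x 0 = z ∧
          ∀ t ∈ Icc (0 : ℝ) T,
            HasDerivWithinAt x (ε • G t (x t) + ε ^ 2 • R t (x t) ε) (Icc (0 : ℝ) T) t) ∧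
        ∀ y : ℝ → EuclideanSpace ℝ (Fin n),
          ((∀ t ∈ Icc (0 : ℝ) T, y t ∈ D) ∧ y 0 = z ∧
            ∀ t ∈ Icc (0 : ℝ) T,
              HasDerivWithinAt y (ε • G t (y t) + ε ^ 2 • R t (y t) ε) (Icc (0 : ℝ) T) t) →
          EqOn x y (Icc (0 : ℝ) T) := by
  classical
  have hKcl : IsCompact (closure C) := hCbdd.isCompact_closure
  obtain ⟨r, hr, hrD⟩ := hKcl.exists_cthickening_subset_open hD hCcl
  set K' : Set (EuclideanSpace ℝ (Fin n)) := cthickening r (closure C) with hK'def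
  have hK'c : IsCompact K' := hKcl.cthickening
  have hK'D : K' ⊆ D := hrD
  -- global bounds (for all times, via periodicity)
  obtain ⟨MG, hMG0, hMG⟩ := bound_all_aux hT hK'D hK'c hGc hGper
  have hRc' : ∀ e ∈ Icc (-1 : ℝ) 1,
      ContinuousOn (fun p : ℝ × EuclideanSpace ℝ (Fin n) => R p.1 p.2 e) (univ ×ˢ D) := by
    intro e he
    have hmap : MapsTo (fun p : ℝ × EuclideanSpace ℝ (Fin n) => (p.1, p.2, e))
        (univ ×ˢ D) (univ ×ˢ D ×ˢ Icc (-1 : ℝ) 1) := fun p hp => ⟨trivial, hp.2, he⟩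
    exact hRc.comp ((continuous_fst.prodMk (continuous_snd.prodMk
      continuous_const)).continuousOn) hmap
  obtain ⟨MR, hMR0, hMR⟩ : ∃ M : ℝ, 0 ≤ M ∧ ∀ t : ℝ, ∀ x ∈ K', ∀ e ∈ Icc (-1 : ℝ) 1,
      ‖R t x e‖ ≤ M := by
    obtain ⟨M, hM⟩ := (isCompact_Icc.prod (hK'c.prod isCompact_Icc)).exists_bound_of_continuousOn
      (hRc.mono (prod_mono (subset_univ _) (prod_mono hK'D le_rfl)))
    refine ⟨max M 0, le_max_right _ _, fun t x hx e he => ?_⟩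
    refine periodic_bound_aux (f := fun s => ‖R s x e‖) hT (fun s => by simp only [hRper])
      (fun s hs => ?_) t
    exact le_trans (hM (s, x, e) ⟨hs, hx, he⟩) (le_max_left _ _)
  set M : ℝ := max MG MR with hMdef
  have hM0 : 0 ≤ M := le_trans hMG0 (le_max_left _ _)
  set ε₀ : ℝ := min 1 (r / (2 * M * T + 1)) with hε₀def
  have hden : 0 < 2 * M * T + 1 := by nlinarith
  have hε₀pos : 0 < ε₀ := lt_min one_pos (div_pos hr hden)
  have hε₀le1 : ε₀ ≤ 1 := min_le_left _ _
  have hε₀r : 2 * ε₀ * M * T ≤ r := by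
    have h1 : ε₀ ≤ r / (2 * M * T + 1) := min_le_right _ _
    rw [le_div_iff₀ hden] at h1
    nlinarith [hε₀pos.le]
  refine ⟨ε₀, ⟨hε₀pos, hε₀le1⟩, fun ε hε z hz => ?_⟩
  have hεε₀ : |ε| ≤ ε₀ := hε
  have hε1 : |ε| ≤ 1 := hεε₀.trans hε₀le1
  have hεI : ε ∈ Icc (-1 : ℝ) 1 := abs_le.1 hε1
  set F : ℝ → EuclideanSpace ℝ (Fin n) → EuclideanSpace ℝ (Fin n) :=
    fun t x => ε • G t x + ε ^ 2 • R t x ε with hFdef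
  have hεsq : ε ^ 2 ≤ |ε| := by
    rw [← sq_abs]
    nlinarith [abs_nonneg ε]
  have hεsq0 : (0 : ℝ) ≤ ε ^ 2 := sq_nonneg ε
  -- local Lipschitz property of F
  have hFlip : ∀ x₀ ∈ D, ∃ U ∈ nhds x₀, ∃ L : ℝ, ∀ t : ℝ, ∀ x₁ ∈ U ∩ D, ∀ x₂ ∈ U ∩ D,
      ‖F t x₁ - F t x₂‖ ≤ L * ‖x₁ - x₂‖ := by
    intro x₀ hx₀
    obtain ⟨U₁, hU₁, L₁, h₁⟩ := hGlip x₀ hx₀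
    obtain ⟨U₂, hU₂, L₂, h₂⟩ := hRlip x₀ hx₀
    refine ⟨U₁ ∩ U₂, Filter.inter_mem hU₁ hU₂, L₁ + L₂, fun t x₁ hx₁ x₂ hx₂ => ?_⟩
    have e₁ := h₁ t x₁ ⟨hx₁.1.1, hx₁.2⟩ x₂ ⟨hx₂.1.1, hx₂.2⟩
    have e₂ := h₂ t ε hεI x₁ ⟨hx₁.1.2, hx₁.2⟩ x₂ ⟨hx₂.1.2, hx₂.2⟩
    have hG0 := norm_nonneg (G t x₁ - G t x₂)
    have hR0 := norm_nonneg (R t x₁ ε - R t x₂ ε)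
    have heq : F t x₁ - F t x₂ = ε • (G t x₁ - G t x₂) + ε ^ 2 • (R t x₁ ε - R t x₂ ε) := by
      simp only [hFdef, smul_sub]
      abel
    calc ‖F t x₁ - F t x₂‖ ≤ ‖ε • (G t x₁ - G t x₂)‖ + ‖ε ^ 2 • (R t x₁ ε - R t x₂ ε)‖ := by
          rw [heq]; exact norm_add_le _ _
      _ = |ε| * ‖G t x₁ - G t x₂‖ + ε ^ 2 * ‖R t x₁ ε - R t x₂ ε‖ := by
          rw [norm_smul, norm_smul, Real.norm_eq_abs, Real.norm_eq_abs, abs_of_nonneg hεsq0]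
      _ ≤ 1 * ‖G t x₁ - G t x₂‖ + 1 * ‖R t x₁ ε - R t x₂ ε‖ := by
          have : ε ^ 2 ≤ 1 := hεsq.trans hε1
          nlinarith
      _ ≤ (L₁ + L₂) * ‖x₁ - x₂‖ := by
          have h₁' : ‖G t x₁ - G t x₂‖ ≤ L₁ * ‖x₁ - x₂‖ := e₁
          have h₂' : ‖R t x₁ ε - R t x₂ ε‖ ≤ L₂ * ‖x₁ - x₂‖ := e₂
          nlinarith
  -- bound for F on K'
  have hFbd : ∀ t : ℝ, ∀ x ∈ K', ‖F t x‖ ≤ 2 * ε₀ * M := by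
    intro t x hx
    have hg := hMG t x hx
    have hrr := hMR t x hx ε hεI
    have hMGM : MG ≤ M := le_max_left _ _
    have hMRM : MR ≤ M := le_max_right _ _
    calc ‖F t x‖ ≤ ‖ε • G t x‖ + ‖ε ^ 2 • R t x ε‖ := norm_add_le _ _
      _ = |ε| * ‖G t x‖ + ε ^ 2 * ‖R t x ε‖ := by
          rw [norm_smul, norm_smul, Real.norm_eq_abs, Real.norm_eq_abs, abs_of_nonneg hεsq0]
      _ ≤ ε₀ * M + ε₀ * M := by
          have h1 : |ε| * ‖G t x‖ ≤ ε₀ * M := by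
            have := norm_nonneg (G t x)
            nlinarith [abs_nonneg ε]
          have h2 : ε ^ 2 * ‖R t x ε‖ ≤ ε₀ * M := by
            have := norm_nonneg (R t x ε)
            nlinarith [abs_nonneg ε]
          linarith
      _ = 2 * ε₀ * M := by ring
  -- continuity of F in time
  have hFcont : ∀ x ∈ D, ContinuousOn (fun t => F t x) (Icc (0 : ℝ) T) := by
    intro x hx
    have hg : ContinuousOn (fun t : ℝ => G t x) (Icc (0 : ℝ) T) :=
      hGc.comp ((continuous_id.prodMk continuous_const).continuousOn)
        (fun t _ => ⟨trivial, hx⟩)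
    have hrr : ContinuousOn (fun t : ℝ => R t x ε) (Icc (0 : ℝ) T) :=
      hRc.comp ((continuous_id.prodMk (continuous_const.prodMk
        continuous_const)).continuousOn) (fun t _ => ⟨trivial, hx, hεI⟩)
    exact (hg.const_smul ε).add (hrr.const_smul (ε ^ 2))
  -- Lipschitz constant on K'
  obtain ⟨Lc, hLc⟩ := lipschitzOnWith_of_compact hD hK'c hK'D hFbd hFlip
  -- existence
  have hzball : closedBall z r ⊆ K' := closedBall_subset_cthickening (subset_closure hz) r
  have h2εM : 0 ≤ 2 * ε₀ * M := by positivity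
  have hpl : IsPicardLindelof F (t₀ := (⟨0, le_rfl, hT.le⟩ : Icc (0 : ℝ) T)) z ⟨r, hr.le⟩ 0
      ⟨2 * ε₀ * M, h2εM⟩ Lc :=
    { lipschitzOnWith := fun t _ => (hLc t).mono hzball
      continuousOn := fun x hx => hFcont x (hK'D (hzball hx))
      norm_le := fun t _ x hx => hFbd t x (hzball hx)
      mul_max_le := by
        simp only [NNReal.coe_mk, NNReal.coe_zero, sub_zero, sub_self]
        rw [max_eq_left hT.le]
        exact hε₀r }
  obtain ⟨x, hx0, hx⟩ := isPicardLindelof_exists_mem_closedBall z hpl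
  have hxD : ∀ t ∈ Icc (0 : ℝ) T, x t ∈ D := fun t ht => hK'D (hzball (hx t ht).1)
  have hxderiv : ∀ t ∈ Icc (0 : ℝ) T, HasDerivWithinAt x (F t (x t)) (Icc (0 : ℝ) T) t :=
    fun t ht => (hx t ht).2
  refine ⟨x, ⟨hxD, hx0, fun t ht => by simpa only [hFdef] using hxderiv t ht⟩, ?_⟩
  -- uniqueness
  rintro y ⟨hyD, hy0, hyderiv'⟩
  have hyderiv : ∀ t ∈ Icc (0 : ℝ) T, HasDerivWithinAt y (F t (y t)) (Icc (0 : ℝ) T) t :=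
    fun t ht => by simpa only [hFdef] using hyderiv' t ht
  have hxcont : ContinuousOn x (Icc (0 : ℝ) T) :=
    fun t ht => (hxderiv t ht).continuousWithinAt
  have hycont : ContinuousOn y (Icc (0 : ℝ) T) :=
    fun t ht => (hyderiv t ht).continuousWithinAt
  set Kxy : Set (EuclideanSpace ℝ (Fin n)) := x '' Icc 0 T ∪ y '' Icc 0 T with hKxydef
  have hKxyc : IsCompact Kxy :=
    (isCompact_Icc.image_of_continuousOn hxcont).union
      (isCompact_Icc.image_of_continuousOn hycont)
  have hKxyD : Kxy ⊆ D := by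
    rintro p (⟨t, ht, rfl⟩ | ⟨t, ht, rfl⟩)
    · exact hxD t ht
    · exact hyD t ht
  -- bound of F on Kxy (for all times)
  have hFper : ∀ t xx, F (t + T) xx = F t xx := by
    intro t xx
    simp only [hFdef, hGper, hRper]
  obtain ⟨MG₂, hMG₂0, hMG₂⟩ := bound_all_aux hT hKxyD hKxyc hGc hGper
  obtain ⟨MR₂, hMR₂0, hMR₂⟩ := bound_all_aux (g := fun t xx => R t xx ε) hT hKxyD hKxyc (hRc' ε hεI)
    (fun t xx => hRper t xx ε)
  have hFbd₂ : ∀ t : ℝ, ∀ p ∈ Kxy, ‖F t p‖ ≤ MG₂ + MR₂ := by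
    intro t p hp
    calc ‖F t p‖ ≤ ‖ε • G t p‖ + ‖ε ^ 2 • R t p ε‖ := norm_add_le _ _
      _ = |ε| * ‖G t p‖ + ε ^ 2 * ‖R t p ε‖ := by
          rw [norm_smul, norm_smul, Real.norm_eq_abs, Real.norm_eq_abs, abs_of_nonneg hεsq0]
      _ ≤ MG₂ + MR₂ := by
          have h1 := hMG₂ t p hp
          have h2 := hMR₂ t p hp
          have h3 : ε ^ 2 ≤ 1 := hεsq.trans hε1
          have := norm_nonneg (G t p)
          have := norm_nonneg (R t p ε)
          nlinarith [abs_nonneg ε]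
  obtain ⟨L₂, hL₂⟩ := lipschitzOnWith_of_compact hD hKxyc hKxyD hFbd₂ hFlip
  have hderivx' : ∀ t ∈ Ico (0 : ℝ) T, HasDerivWithinAt x (F t (x t)) (Ici t) t :=
    fun t ht => (hxderiv t ⟨ht.1, ht.2.le⟩).mono_of_mem_nhdsWithin (Icc_mem_nhdsGE_of_mem ht)
  have hderivy' : ∀ t ∈ Ico (0 : ℝ) T, HasDerivWithinAt y (F t (y t)) (Ici t) t :=
    fun t ht => (hyderiv t ⟨ht.1, ht.2.le⟩).mono_of_mem_nhdsWithin (Icc_mem_nhdsGE_of_mem ht)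
  exact ODE_solution_unique_of_mem_Icc_right (fun t _ => hL₂ t) hxcont hderivx'
    (fun t ht => Or.inl ⟨t, ⟨ht.1, ht.2.le⟩, rfl⟩) hycont hderivy'
    (fun t ht => Or.inr ⟨t, ⟨ht.1, ht.2.le⟩, rfl⟩) (hx0.trans hy0.symm)
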